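/- For all natural numbers 2 ≤ k < m, (O_{k-1}·O_{m-k})/O_m ≤ √(π/2)·k^{3/4}·√(C(m,k)), where C(m,k) is the binomial coefficient. -/

import Mathlib

open Real

/-- The m-dimensional volume of the unit sphere `S^m ⊆ ℝ^{m+1}`. -/
noncomputable def sphereVol (m : ℕ) : ℝ :=
  2 * Real.pi ^ (((m : ℝ) + 1) / 2) / Real.Gamma (((m : ℝ) + 1) / 2)


lemma gamma_midpoint {x y : ℝ} (hx : 0 < x) (hy : 0 < y) :
    Real.Gamma ((x + y) / 2) ^ 2 ≤ Real.Gamma x * Real.Gamma y := by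
  have h := Real.convexOn_log_Gamma.2 (Set.mem_Ioi.mpr hx) (Set.mem_Ioi.mpr hy)
      (by norm_num : (0:ℝ) ≤ 1/2) (by norm_num : (0:ℝ) ≤ 1/2) (by norm_num)
  simp only [Function.comp, smul_eq_mul] at h
  rw [show (1/2 : ℝ) * x + (1/2 : ℝ) * y = (x + y) / 2 by ring] at h
  have hGx : 0 < Real.Gamma x := Real.Gamma_pos_of_pos hx
  have hGy : 0 < Real.Gamma y := Real.Gamma_pos_of_pos hy
  have hGm : 0 < Real.Gamma ((x + y) / 2) := Real.Gamma_pos_of_pos (by linarith)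
  have h2 : 2 * Real.log (Real.Gamma ((x+y)/2)) ≤
      Real.log (Real.Gamma x) + Real.log (Real.Gamma y) := by linarith
  have := Real.exp_le_exp.mpr h2
  rwa [Real.exp_add, Real.exp_log hGx, Real.exp_log hGy,
    show (2:ℝ) * Real.log (Real.Gamma ((x+y)/2)) =
      Real.log (Real.Gamma ((x+y)/2)) + Real.log (Real.Gamma ((x+y)/2)) by ring,
    Real.exp_add, Real.exp_log hGm, ← sq] at this

lemma L1 {x : ℝ} (hx : 0 < x) :
    Real.Gamma (x + 1/2) ^ 2 ≤ x * Real.Gamma x ^ 2 := by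
  have h := gamma_midpoint hx (show (0:ℝ) < x + 1 by linarith)
  rw [show (x + (x+1))/2 = x + 1/2 by ring, Real.Gamma_add_one hx.ne'] at h
  nlinarith [h]

lemma L2 {x : ℝ} (hx : 0 < x) :
    x ^ 2 * Real.Gamma x ^ 2 ≤ (x + 1/2) * Real.Gamma (x + 1/2) ^ 2 := by
  have h := gamma_midpoint (show (0:ℝ) < x + 1/2 by linarith)
      (show (0:ℝ) < x + 3/2 by linarith)
  rw [show (x + 1/2 + (x + 3/2))/2 = x + 1 by ring,
    show x + 3/2 = (x + 1/2) + 1 by ring,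
    Real.Gamma_add_one (by positivity : x + 1/2 ≠ 0),
    Real.Gamma_add_one hx.ne'] at h
  nlinarith [h]

lemma core {a b : ℝ} (ha : 1 ≤ a) (hb : 1 ≤ b) :
    4 * Real.Gamma (a+b) * Real.Gamma (a + 1/2) * Real.Gamma (b + 1/2)
      ≤ π * Real.sqrt π * Real.sqrt (2*a) * Real.Gamma (a+b+1/2) * Real.Gamma a * Real.Gamma b := by
  have ha0 : (0:ℝ) < a := by linarith
  have hb0 : (0:ℝ) < b := by linarith
  set A := Real.Gamma a with hA
  set B := Real.Gamma b with hB
  set A' := Real.Gamma (a + 1/2) with hA'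
  set B' := Real.Gamma (b + 1/2) with hB'
  set G := Real.Gamma (a + b) with hG
  set G' := Real.Gamma (a + b + 1/2) with hG'
  have pA : 0 < A := Real.Gamma_pos_of_pos ha0
  have pB : 0 < B := Real.Gamma_pos_of_pos hb0
  have pA' : 0 < A' := Real.Gamma_pos_of_pos (by linarith)
  have pB' : 0 < B' := Real.Gamma_pos_of_pos (by linarith)
  have pG : 0 < G := Real.Gamma_pos_of_pos (by linarith)
  have pG' : 0 < G' := Real.Gamma_pos_of_pos (by linarith)
  have h1 : A' ^ 2 ≤ a * A ^ 2 := L1 ha0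
  have h2 : B' ^ 2 ≤ b * B ^ 2 := L1 hb0
  have h3 : (a+b)^2 * G^2 ≤ (a+b+1/2) * G'^2 := L2 (by linarith)
  have hπ1 : (3:ℝ) < π := Real.pi_gt_three
  have hπ2 : (9:ℝ) < π ^ 2 := by nlinarith
  have hπ3 : (27:ℝ) ≤ π ^ 3 := by nlinarith
  have scalar : 16 * a * b * (a+b+1/2) ≤ 2 * π^3 * a * (a+b)^2 := by
    have hq : (0:ℝ) ≤ a * (a+b)^2 := by positivity
    have h27 : (0:ℝ) ≤ π^3 - 27 := by linarith
    nlinarith [mul_nonneg h27 hq, sq_nonneg (a+b), mul_pos ha0 hb0,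
      mul_nonneg (mul_nonneg ha0.le hb0.le) (by linarith : (0:ℝ) ≤ a + b)]
  -- squared inequality
  have sq1 : A'^2 * B'^2 ≤ (a * A^2) * (b * B^2) :=
    mul_le_mul h1 h2 (sq_nonneg _) (by positivity)
  have sq2 : 16 * a * b * G^2 ≤ 2 * π^3 * a * G'^2 := by
    have t1 := mul_le_mul_of_nonneg_right scalar (sq_nonneg G)
    have t2 : 2*π^3*a * ((a+b)^2 * G^2) ≤ 2*π^3*a * ((a+b+1/2) * G'^2) :=
      mul_le_mul_of_nonneg_left h3 (by positivity)
    have hpos : (0:ℝ) < a + b + 1/2 := by linarith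
    have t3 : (16*a*b*G^2) * (a+b+1/2) ≤ (2*π^3*a*G'^2) * (a+b+1/2) := by
      ring_nf at t1 t2 ⊢
      linarith
    exact le_of_mul_le_mul_right t3 hpos
  have main_sq : (4 * G * A' * B')^2 ≤ (π * Real.sqrt π * Real.sqrt (2*a) * G' * A * B)^2 := by
    have s1 : Real.sqrt π ^ 2 = π := Real.sq_sqrt pi_pos.le
    have s2 : Real.sqrt (2*a) ^ 2 = 2*a := Real.sq_sqrt (by linarith)
    have e1 : (π * Real.sqrt π * Real.sqrt (2*a) * G' * A * B)^2
        = 2 * π^3 * a * G'^2 * A^2 * B^2 := by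
      rw [show (π * Real.sqrt π * Real.sqrt (2*a) * G' * A * B)^2
        = Real.sqrt π ^ 2 * Real.sqrt (2*a) ^ 2 * (π^2 * G'^2 * A^2 * B^2) by ring, s1, s2]
      ring
    rw [e1]
    calc (4 * G * A' * B')^2 = 16 * G^2 * (A'^2 * B'^2) := by ring
      _ ≤ 16 * G^2 * ((a*A^2) * (b*B^2)) := by
          exact mul_le_mul_of_nonneg_left sq1 (by positivity)
      _ = (16 * a * b * G^2) * (A^2 * B^2) := by ring
      _ ≤ (2 * π^3 * a * G'^2) * (A^2 * B^2) :=
          mul_le_mul_of_nonneg_right sq2 (by positivity)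
      _ = 2 * π^3 * a * G'^2 * A^2 * B^2 := by ring
  have hL : (0:ℝ) ≤ 4 * G * A' * B' := by positivity
  have hR : (0:ℝ) ≤ π * Real.sqrt π * Real.sqrt (2*a) * G' * A * B := by positivity
  have := Real.sqrt_le_sqrt main_sq
  rwa [Real.sqrt_sq hL, Real.sqrt_sq hR] at this

lemma main_gamma {a b : ℝ} (ha : 1 ≤ a) (hb : 1 ≤ b) :
    2 * Real.Gamma (a+b) / (Real.Gamma a * Real.Gamma b)
      ≤ Real.sqrt (π/2) * (2*a) ^ ((3:ℝ)/4) *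
        Real.sqrt (Real.Gamma (2*a+2*b) / (Real.Gamma (2*a+1) * Real.Gamma (2*b))) := by
  have ha0 : (0:ℝ) < a := by linarith
  have hb0 : (0:ℝ) < b := by linarith
  set A := Real.Gamma a with hA
  set B := Real.Gamma b with hB
  set A' := Real.Gamma (a + 1/2) with hA'
  set B' := Real.Gamma (b + 1/2) with hB'
  set G := Real.Gamma (a + b) with hG
  set G' := Real.Gamma (a + b + 1/2) with hG'
  have pA : 0 < A := Real.Gamma_pos_of_pos ha0
  have pB : 0 < B := Real.Gamma_pos_of_pos hb0
  have pA' : 0 < A' := Real.Gamma_pos_of_pos (by linarith)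
  have pB' : 0 < B' := Real.Gamma_pos_of_pos (by linarith)
  have pG : 0 < G := Real.Gamma_pos_of_pos (by linarith)
  have pG' : 0 < G' := Real.Gamma_pos_of_pos (by linarith)
  have p2a : 0 < Real.Gamma (2*a) := Real.Gamma_pos_of_pos (by linarith)
  have p2b : 0 < Real.Gamma (2*b) := Real.Gamma_pos_of_pos (by linarith)
  have p2s : 0 < Real.Gamma (2*a+2*b) := Real.Gamma_pos_of_pos (by linarith)
  have d1 : A * A' = Real.Gamma (2*a) * (2:ℝ) ^ (1 - 2*a) * Real.sqrt π :=
    Real.Gamma_mul_Gamma_add_half a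
  have d2 : B * B' = Real.Gamma (2*b) * (2:ℝ) ^ (1 - 2*b) * Real.sqrt π :=
    Real.Gamma_mul_Gamma_add_half b
  have d3 : G * G' = Real.Gamma (2*a+2*b) * (2:ℝ) ^ (1 - (2*a+2*b)) * Real.sqrt π := by
    have := Real.Gamma_mul_Gamma_add_half (a+b)
    rwa [show 2*(a+b) = 2*a+2*b by ring] at this
  have hP : (2:ℝ) ^ (1 - 2*a) * (2:ℝ) ^ (1 - 2*b) = 2 * (2:ℝ) ^ (1 - (2*a+2*b)) := by
    rw [← Real.rpow_add two_pos, show (2:ℝ) * (2:ℝ) ^ (1 - (2*a+2*b))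
      = (2:ℝ) ^ (1:ℝ) * (2:ℝ) ^ (1 - (2*a+2*b)) by rw [Real.rpow_one],
      ← Real.rpow_add two_pos]
    congr 1
    ring
  have hX : Real.Gamma (2*a+2*b) / (Real.Gamma (2*a+1) * Real.Gamma (2*b))
      = Real.sqrt π * (G * G') / (a * (A * A' * B * B')) := by
    rw [show (2*a+1 : ℝ) = 2*a + 1 by ring, Real.Gamma_add_one (by positivity : (2:ℝ)*a ≠ 0)]
    rw [div_eq_div_iff (by positivity) (by positivity)]
    linear_combination (a * Real.Gamma (2*a+2*b) * (B*B')) * d1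
      + (a * Real.Gamma (2*a+2*b) * Real.Gamma (2*a) * ((2:ℝ)^(1-2*a)) * Real.sqrt π) * d2
      + (a * Real.Gamma (2*a+2*b) * Real.Gamma (2*a) * Real.Gamma (2*b) * Real.sqrt π ^ 2) * hP
      - (2 * a * Real.sqrt π * Real.Gamma (2*a) * Real.Gamma (2*b)) * d3
  rw [hX]
  -- reduce to squared inequality
  have final : 4*G^2/(A^2*B^2) ≤ π * Real.sqrt π * Real.sqrt (2*a) * (G*G') / (A*A'*B*B') := by
    rw [div_le_div_iff₀ (by positivity) (by positivity)]
    have hc := mul_le_mul_of_nonneg_right (core ha hb) (by positivity : (0:ℝ) ≤ G*A*B)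
    calc 4*G^2*(A*A'*B*B') = 4*G*A'*B'*(G*A*B) := by ring
      _ ≤ π * Real.sqrt π * Real.sqrt (2*a) * G' * A * B * (G*A*B) := hc
      _ = π * Real.sqrt π * Real.sqrt (2*a) * (G*G') * (A^2*B^2) := by ring
  have h34 : (2*a) ^ ((3:ℝ)/4) = Real.sqrt ((2*a) ^ ((3:ℝ)/2)) := by
    rw [Real.sqrt_eq_rpow, ← Real.rpow_mul (by linarith : (0:ℝ) ≤ 2*a)]
    norm_num
  have h32 : (2*a) ^ ((3:ℝ)/2) = 2*a*Real.sqrt (2*a) := by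
    rw [show (3:ℝ)/2 = 1 + 1/2 by norm_num, Real.rpow_add (by linarith), Real.rpow_one,
      ← Real.sqrt_eq_rpow]
  have hXpos : (0:ℝ) ≤ Real.sqrt π * (G * G') / (a * (A * A' * B * B')) := by positivity
  calc 2 * G / (A * B)
      ≤ Real.sqrt (π/2 * (2*a) ^ ((3:ℝ)/2) * (Real.sqrt π * (G*G') / (a * (A*A'*B*B')))) := by
        rw [Real.le_sqrt (by positivity) (by positivity)]
        rw [h32]
        calc (2*G/(A*B))^2 = 4*G^2/(A^2*B^2) := by rw [div_pow]; ring_nf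
          _ ≤ π * Real.sqrt π * Real.sqrt (2*a) * (G*G') / (A*A'*B*B') := final
          _ = π/2 * (2*a*Real.sqrt (2*a)) * (Real.sqrt π * (G*G') / (a * (A*A'*B*B'))) := by
              field_simp
    _ = Real.sqrt (π/2) * (2*a) ^ ((3:ℝ)/4) *
        Real.sqrt (Real.sqrt π * (G*G') / (a * (A*A'*B*B'))) := by
        rw [Real.sqrt_mul (by positivity), Real.sqrt_mul (by positivity), h34]

theorem sphereVol_ratio_bound (m k : ℕ) (hk : 2 ≤ k) (hkm : k < m) :
    sphereVol (k - 1) * sphereVol (m - k) / sphereVol m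
      ≤ Real.sqrt (Real.pi / 2) * (k : ℝ) ^ ((3 : ℝ) / 4) * Real.sqrt (m.choose k) := by
  have hk1 : (1:ℕ) ≤ k := by omega
  have hkm' : k ≤ m := hkm.le
  have hk2 : (2:ℝ) ≤ (k:ℝ) := by exact_mod_cast hk
  have hmk : (k:ℝ) + 1 ≤ (m:ℝ) := by exact_mod_cast hkm
  set a : ℝ := (k:ℝ)/2 with hadef
  set b : ℝ := ((m:ℝ) - (k:ℝ) + 1)/2 with hbdef
  have ha : 1 ≤ a := by rw [hadef]; linarith
  have hb : 1 ≤ b := by rw [hbdef]; linarith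
  have cast1 : ((k-1:ℕ):ℝ) = (k:ℝ) - 1 := by
    push_cast [hk1]; ring
  have cast2 : ((m-k:ℕ):ℝ) = (m:ℝ) - (k:ℝ) := by
    push_cast [hkm']; ring
  have e1 : sphereVol (k-1) = 2 * π ^ a / Real.Gamma a := by
    unfold sphereVol
    rw [cast1, show ((k:ℝ) - 1 + 1)/2 = a from by rw [hadef]; ring]
  have e2 : sphereVol (m-k) = 2 * π ^ b / Real.Gamma b := by
    unfold sphereVol
    rw [cast2, show ((m:ℝ) - (k:ℝ) + 1)/2 = b from by rw [hbdef]]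
  have e3 : sphereVol m = 2 * π ^ (a+b) / Real.Gamma (a+b) := by
    unfold sphereVol
    rw [show ((m:ℝ) + 1)/2 = a + b from by rw [hadef, hbdef]; ring]
  have pπa : (0:ℝ) < π ^ a := Real.rpow_pos_of_pos pi_pos a
  have pπb : (0:ℝ) < π ^ b := Real.rpow_pos_of_pos pi_pos b
  have pA : 0 < Real.Gamma a := Real.Gamma_pos_of_pos (by linarith)
  have pB : 0 < Real.Gamma b := Real.Gamma_pos_of_pos (by linarith)
  have pG : 0 < Real.Gamma (a+b) := Real.Gamma_pos_of_pos (by linarith)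
  have hLHS : sphereVol (k-1) * sphereVol (m-k) / sphereVol m
      = 2 * Real.Gamma (a+b) / (Real.Gamma a * Real.Gamma b) := by
    rw [e1, e2, e3, Real.rpow_add pi_pos a b]
    field_simp
  have hchoose : ((m.choose k : ℕ):ℝ)
      = Real.Gamma (2*a+2*b) / (Real.Gamma (2*a+1) * Real.Gamma (2*b)) := by
    rw [Nat.cast_choose ℝ hkm',
      show 2*a+2*b = (m:ℝ)+1 from by rw [hadef, hbdef]; ring,
      show 2*a+1 = (k:ℝ)+1 from by rw [hadef]; ring,
      show 2*b = ((m-k:ℕ):ℝ)+1 from by rw [hbdef, cast2]; ring,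
      Real.Gamma_nat_eq_factorial, Real.Gamma_nat_eq_factorial, Real.Gamma_nat_eq_factorial]
  rw [hLHS, show (k:ℝ) = 2*a from by rw [hadef]; ring, hchoose]
  exact main_gamma ha hb
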